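/- Let S be the n×n matrix with S_{u,v} = (f[u] − f[v])² for a signal f ∈ ℝⁿ, C = n·I − J, and x ∈ {−1,1}ⁿ with parts X, X̄. Then xᵀ C S C x = −8·( |X|·Σ_{v∈X̄} f[v] − |X̄|·Σ_{u∈X} f[u] )². -/
import Mathlib


open Matrix

/-- For the signal matrix `S` with `S u v = (f u − f v)²`, `C = n•I − J`, and a
`±1` cut indicator `x` with parts `X`, `X̄`:
`xᵀ C S C x = −8 (|X| ∑_{v∈X̄} f v − |X̄| ∑_{u∈X} f u)²`. -/
theorem stmt_14 (n : ℕ) (f : Fin n → ℝ)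
    (S : Matrix (Fin n) (Fin n) ℝ) (hS : ∀ u v, S u v = (f u - f v) ^ 2)
    (C : Matrix (Fin n) (Fin n) ℝ)
    (hC : C = (n : ℝ) • 1 - Matrix.of fun _ _ => (1 : ℝ))
    (x : Fin n → ℝ) (hx : ∀ v, x v = 1 ∨ x v = -1) :
    x ⬝ᵥ (C * S * C).mulVec x =
      -8 * (((Finset.univ.filter fun v : Fin n => x v = 1).card : ℝ) *
              (∑ v ∈ Finset.univ.filter (fun v : Fin n => x v = -1), f v)
            - ((Finset.univ.filter fun v : Fin n => x v = -1).card : ℝ) *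
              (∑ u ∈ Finset.univ.filter (fun u : Fin n => x u = 1), f u)) ^ 2 := by
  classical
  set A := Finset.univ.filter (fun v : Fin n => x v = 1) with hA
  set B := Finset.univ.filter (fun v : Fin n => x v = -1) with hB
  have hBcompl : B = Finset.univ.filter (fun v : Fin n => ¬ x v = 1) := by
    ext v
    simp only [hB, Finset.mem_filter, Finset.mem_univ, true_and]
    rcases hx v with h | h <;> simp [h] <;> norm_num
  set y := C.mulVec x with hy
  have hCsym : Cᵀ = C := by
    rw [hC]
    ext i j
    simp [Matrix.one_apply, eq_comm]
  have hLHS : x ⬝ᵥ (C * S * C).mulVec x = y ⬝ᵥ S.mulVec y := by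
    rw [mul_assoc, ← Matrix.mulVec_mulVec,
      Matrix.dotProduct_mulVec x C, ← Matrix.mulVec_transpose, hCsym,
      ← Matrix.mulVec_mulVec]
  have hs : ∑ v, x v = (A.card : ℝ) - B.card := by
    rw [← Finset.sum_filter_add_sum_filter_not Finset.univ (fun v => x v = 1), ← hA, ← hBcompl]
    rw [Finset.sum_congr rfl (fun v hv => (Finset.mem_filter.mp hv).2),
        Finset.sum_congr rfl (fun v hv => (Finset.mem_filter.mp (hB ▸ hv : v ∈ Finset.univ.filter fun v => x v = -1)).2)]
    simp only [Finset.sum_const, nsmul_eq_mul, mul_one, mul_neg_one, ← hA]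
    ring
  have hyv : ∀ v, y v = (n : ℝ) * x v - ∑ u, x u := by
    intro v
    simp only [hy, hC, Matrix.mulVec, dotProduct, Matrix.sub_apply,
      Matrix.smul_apply, Matrix.one_apply, Matrix.of_apply, smul_eq_mul]
    rw [Finset.sum_congr rfl (fun u _ => show ((n : ℝ) * (if v = u then 1 else 0) - 1) * x u
      = (n : ℝ) * ((if v = u then 1 else 0) * x u) - x u by ring)]
    rw [Finset.sum_sub_distrib, ← Finset.mul_sum]
    congr 1
    congr 1
    simp [ite_mul]
  have hsY : ∑ v, y v = 0 := by
    simp only [hyv]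
    rw [Finset.sum_sub_distrib, ← Finset.mul_sum]
    simp [Finset.sum_const, Finset.card_univ, nsmul_eq_mul, mul_comm]
  have hexp : y ⬝ᵥ S.mulVec y =
      (∑ v, y v * f v ^ 2) * (∑ v, y v) + (∑ v, y v) * (∑ v, y v * f v ^ 2)
        - 2 * ((∑ v, y v * f v) * (∑ v, y v * f v)) := by
    rw [Finset.sum_mul_sum, Finset.sum_mul_sum, Finset.sum_mul_sum]
    simp only [dotProduct, Matrix.mulVec, hS, Finset.mul_sum]
    rw [← Finset.sum_add_distrib, ← Finset.sum_sub_distrib]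
    refine Finset.sum_congr rfl fun u _ => ?_
    rw [← Finset.sum_add_distrib, ← Finset.sum_sub_distrib]
    exact Finset.sum_congr rfl fun v _ => by ring
  have hyf : ∑ v, y v * f v =
      2 * (B.card : ℝ) * (∑ u ∈ A, f u) - 2 * (A.card : ℝ) * (∑ v ∈ B, f v) := by
    have hxf : ∑ v, x v * f v = (∑ u ∈ A, f u) - (∑ v ∈ B, f v) := by
      rw [← Finset.sum_filter_add_sum_filter_not Finset.univ (fun v => x v = 1)
        (fun v => x v * f v), ← hA, ← hBcompl]
      have h1 : ∑ v ∈ A, x v * f v = ∑ v ∈ A, f v :=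
        Finset.sum_congr rfl fun v hv => by
          rw [(Finset.mem_filter.mp hv).2, one_mul]
      have h2 : ∑ v ∈ B, x v * f v = ∑ v ∈ B, -f v :=
        Finset.sum_congr rfl fun v hv => by
          rw [(Finset.mem_filter.mp (hB ▸ hv : v ∈ Finset.univ.filter
            fun v => x v = -1)).2]; ring
      rw [h1, h2, Finset.sum_neg_distrib]
      ring
    have hf : ∑ v, f v = (∑ u ∈ A, f u) + (∑ v ∈ B, f v) := by
      rw [← Finset.sum_filter_add_sum_filter_not Finset.univ (fun v => x v = 1) f,
        ← hA, ← hBcompl]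
    have hn : (n : ℝ) = (A.card : ℝ) + B.card := by
      have : A.card + B.card = n := by
        rw [hBcompl, Finset.card_filter_add_card_filter_not]
        simp
      exact_mod_cast this.symm
    simp only [hyv]
    rw [Finset.sum_congr rfl fun v (_ : v ∈ Finset.univ) =>
      show ((n : ℝ) * x v - ∑ u, x u) * f v
        = (n : ℝ) * (x v * f v) - (∑ u, x u) * f v by ring]
    rw [Finset.sum_sub_distrib, ← Finset.mul_sum, ← Finset.mul_sum]
    rw [hxf, hf, hs, hn]
    ring
  rw [hLHS, hexp, hsY, hyf]
  ring
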